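/- Let μ and ν be probability measures on a measurable space Θ, let ε ≥ 0, and suppose μ(O) ≤ e^ε · ν(O) for every measurable set O ⊆ Θ. Then for every measurable function f : Θ → ℝ with 0 ≤ f(θ) ≤ b for all θ (where b ≥ 0), one has ∫ f dμ − ∫ f dν ≤ b·(e^ε − 1). -/
import Mathlib


open MeasureTheory Real

/-- If `μ(O) ≤ e^ε · ν(O)` for every measurable `O` (one-sided
ε-differential privacy between the two output distributions), then for any
measurable `f` with `0 ≤ f ≤ b`, `∫ f dμ − ∫ f dν ≤ b · (e^ε − 1)`. -/
theorem dp_implies_expectation_gap {Θ : Type*} [MeasurableSpace Θ]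
    (μ ν : Measure Θ) [IsProbabilityMeasure μ] [IsProbabilityMeasure ν]
    (ε : ℝ) (hε : 0 ≤ ε)
    (hdp : ∀ O : Set Θ, MeasurableSet O → μ O ≤ ENNReal.ofReal (exp ε) * ν O)
    (b : ℝ) (hb : 0 ≤ b) (f : Θ → ℝ) (hf : Measurable f)
    (hf0 : ∀ θ, 0 ≤ f θ) (hfb : ∀ θ, f θ ≤ b) :
    ∫ θ, f θ ∂μ - ∫ θ, f θ ∂ν ≤ b * (exp ε - 1) := by
  set c : ENNReal := ENNReal.ofReal (exp ε) with hc
  have hle : μ ≤ c • ν := by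
    refine Measure.le_iff.mpr fun s hs => ?_
    simpa using hdp s hs
  have hlint : ∫⁻ θ, ENNReal.ofReal (f θ) ∂μ ≤ c * ∫⁻ θ, ENNReal.ofReal (f θ) ∂ν := by
    calc ∫⁻ θ, ENNReal.ofReal (f θ) ∂μ ≤ ∫⁻ θ, ENNReal.ofReal (f θ) ∂(c • ν) :=
          lintegral_mono' hle le_rfl
      _ = c * ∫⁻ θ, ENNReal.ofReal (f θ) ∂ν := by simp [lintegral_smul_measure]
  have hb' : ∫⁻ θ, ENNReal.ofReal (f θ) ∂ν ≤ ENNReal.ofReal b := by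
    calc ∫⁻ θ, ENNReal.ofReal (f θ) ∂ν ≤ ∫⁻ _, ENNReal.ofReal b ∂ν :=
          lintegral_mono fun θ => ENNReal.ofReal_le_ofReal (hfb θ)
      _ = ENNReal.ofReal b := by simp
  have hνfin : ∫⁻ θ, ENNReal.ofReal (f θ) ∂ν < ⊤ :=
    lt_of_le_of_lt hb' ENNReal.ofReal_lt_top
  have hμfin : ∫⁻ θ, ENNReal.ofReal (f θ) ∂μ < ⊤ :=
    lt_of_le_of_lt hlint (ENNReal.mul_lt_top ENNReal.ofReal_lt_top hνfin).lt_top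
  have hμeq : ∫ θ, f θ ∂μ = (∫⁻ θ, ENNReal.ofReal (f θ) ∂μ).toReal :=
    integral_eq_lintegral_of_nonneg_ae (Filter.Eventually.of_forall hf0)
      hf.aestronglyMeasurable
  have hνeq : ∫ θ, f θ ∂ν = (∫⁻ θ, ENNReal.ofReal (f θ) ∂ν).toReal :=
    integral_eq_lintegral_of_nonneg_ae (Filter.Eventually.of_forall hf0)
      hf.aestronglyMeasurable
  set I : ℝ := (∫⁻ θ, ENNReal.ofReal (f θ) ∂ν).toReal with hI
  have hI0 : 0 ≤ I := ENNReal.toReal_nonneg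
  have hIb : I ≤ b := by
    rw [hI]
    exact ENNReal.toReal_le_of_le_ofReal hb hb'
  have hμI : ∫ θ, f θ ∂μ ≤ exp ε * I := by
    rw [hμeq]
    have : (∫⁻ θ, ENNReal.ofReal (f θ) ∂μ).toReal ≤
        (c * ∫⁻ θ, ENNReal.ofReal (f θ) ∂ν).toReal :=
      ENNReal.toReal_mono (ENNReal.mul_ne_top ENNReal.ofReal_ne_top hνfin.ne) hlint
    calc (∫⁻ θ, ENNReal.ofReal (f θ) ∂μ).toReal ≤
          (c * ∫⁻ θ, ENNReal.ofReal (f θ) ∂ν).toReal := this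
      _ = exp ε * I := by
          rw [ENNReal.toReal_mul, hc, ENNReal.toReal_ofReal (exp_nonneg ε)]
  have h1 : (1:ℝ) ≤ exp ε := by simpa using exp_le_exp.mpr hε
  calc ∫ θ, f θ ∂μ - ∫ θ, f θ ∂ν ≤ exp ε * I - I := by
        rw [hνeq]; linarith
    _ = I * (exp ε - 1) := by ring
    _ ≤ b * (exp ε - 1) := by nlinarith
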